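/- Up to colored-graph isomorphism, there is a unique (n+1)-regular properly edge-colored graph on 2^n vertices with colors {0,…,n} (n ≥ 2) satisfying: (i) every bi-colored cycle has length ≥ 4, and (ii) for every color subset of size i+1 (0 ≤ i ≤ n−1), the number of connected components of the induced subgraph is 2^{n-i-1}. Namely, it is the n-cube with monochromatic parallel edge classes in colors 0,…,n−1, together with the n-colored perfect matching joining antipodal vertices. -/

import Mathlib

open Finset Function

set_option linter.unusedSectionVars false

namespace Stmt9

variable {V ι : Type} [DecidableEq ι]

def toEnd (φ : ι → V → V) : ι → Function.End V := φ

lemma commute_End (φ : ι → V → V) (hco : ∀ a b (v : V), φ a (φ b v) = φ b (φ a v))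
    (a b : ι) : Commute (toEnd φ a) (toEnd φ b) :=
  funext fun v => hco a b v

def P (φ : ι → V → V) (hco : ∀ a b (v : V), φ a (φ b v) = φ b (φ a v))
    (S : Finset ι) : Function.End V :=
  S.noncommProd (toEnd φ)
    (show (S : Set ι).Pairwise (Commute on toEnd φ) from fun a _ b _ _ => commute_End φ hco a b)

variable (φ : ι → V → V) (hco : ∀ a b (v : V), φ a (φ b v) = φ b (φ a v))

@[simp] lemma P_empty (v : V) : P φ hco ∅ v = v := by
  unfold P; rw [noncommProd_empty]; rfl

lemma P_insert {a : ι} {S : Finset ι} (ha : a ∉ S) (v : V) :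
    P φ hco (insert a S) v = φ a (P φ hco S v) := by
  unfold P; rw [noncommProd_insert_of_notMem _ _ _ _ ha]; rfl

@[simp] lemma P_singleton (a : ι) (v : V) : P φ hco {a} v = φ a v := by
  rw [show ({a} : Finset ι) = insert a ∅ from rfl, P_insert φ hco (notMem_empty a), P_empty]

lemma P_erase {a : ι} {S : Finset ι} (ha : a ∈ S) (v : V) :
    P φ hco S v = φ a (P φ hco (S.erase a) v) := by
  conv_lhs => rw [← Finset.insert_erase ha]
  exact P_insert φ hco (notMem_erase a S) v

lemma P_comm (d : ι) (S : Finset ι) (v : V) :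
    φ d (P φ hco S v) = P φ hco S (φ d v) := by
  induction S using Finset.induction_on generalizing v with
  | empty => simp
  | insert _ _ ha ih =>
    rw [P_insert φ hco ha, P_insert φ hco ha, hco, ih]

lemma P_symmDiff (hinv : ∀ a, Function.Involutive (φ a)) (S T : Finset ι) (v : V) :
    P φ hco (symmDiff S T) v = P φ hco S (P φ hco T v) := by
  induction S using Finset.induction_on generalizing v with
  | empty =>
    rw [show symmDiff (∅ : Finset ι) T = T by rw [← Finset.bot_eq_empty, bot_symmDiff]]
    simp
  | @insert a S haS ih =>
    by_cases haT : a ∈ T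
    · have hmem : a ∈ symmDiff S T := by
        simp [Finset.mem_symmDiff, haS, haT]
      have hset : symmDiff (insert a S) T = (symmDiff S T).erase a := by
        ext x
        by_cases hx : x = a <;>
          simp [Finset.mem_symmDiff, Finset.mem_erase, hx, haS, haT] <;> tauto
      rw [hset, P_insert φ hco haS]
      have := P_erase φ hco hmem v
      rw [ih] at this
      have h2 := congrArg (φ a) this
      rw [hinv a] at h2
      exact h2.symm
    · have hmem : a ∉ symmDiff S T := by
        simp [Finset.mem_symmDiff, haS, haT]
      have hset : symmDiff (insert a S) T = insert a (symmDiff S T) := by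
        ext x
        by_cases hx : x = a <;>
          simp [Finset.mem_symmDiff, hx, haS, haT] <;> tauto
      rw [hset, P_insert φ hco hmem, P_insert φ hco haS, ih]

lemma P_inv (hinv : ∀ a, Function.Involutive (φ a)) (S : Finset ι) (v : V) :
    P φ hco S (P φ hco S v) = v := by
  rw [← P_symmDiff φ hco hinv, symmDiff_self, Finset.bot_eq_empty, P_empty]

/-- counting: total card as sum over fibers of a map -/
lemma card_eq_sum_fibers {α β : Type} [Fintype α] [Fintype β] [DecidableEq β] (f : α → β) :
    Fintype.card α = ∑ b : β, (univ.filter fun a => f a = b).card :=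
  Finset.card_eq_sum_card_fiberwise fun x _ => mem_univ (f x)

lemma sum_point_bound {β : Type} [Fintype β] [DecidableEq β] (g : β → ℕ) (m : ℕ) (b0 : β)
    (h : ∀ b, m ≤ g b) (h0 : m + 1 ≤ g b0) :
    Fintype.card β * m + 1 ≤ ∑ b : β, g b := by
  have h1 : 1 ≤ Fintype.card β := Fintype.card_pos_iff.mpr ⟨b0⟩
  obtain ⟨k, hk⟩ : ∃ k, Fintype.card β = k + 1 := ⟨_, (Nat.succ_pred_eq_of_pos h1).symm⟩
  have hsum : ∑ b ∈ univ.erase b0, g b + g b0 = ∑ b : β, g b :=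
    Finset.sum_erase_add _ _ (mem_univ b0)
  have hle : (univ.erase b0).card * m ≤ ∑ b ∈ univ.erase b0, g b := by
    have := Finset.card_nsmul_le_sum (univ.erase b0) g m (fun x _ => h x)
    simpa [smul_eq_mul] using this
  have hcarde : (univ.erase b0).card = k := by
    rw [Finset.card_erase_of_mem (mem_univ b0), Finset.card_univ, hk]; omega
  rw [hcarde] at hle
  calc Fintype.card β * m + 1 = k * m + (m + 1) := by rw [hk]; ring
    _ ≤ ∑ b ∈ univ.erase b0, g b + g b0 := Nat.add_le_add hle h0
    _ = ∑ b : β, g b := hsum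

lemma fibers_all_eq {β : Type} [Fintype β] (g : β → ℕ) (m : ℕ)
    (h : ∀ b, g b ≤ m) (htot : ∑ b : β, g b = Fintype.card β * m) (b : β) : g b = m := by
  by_contra hne
  have hlt : g b < m := lt_of_le_of_ne (h b) hne
  have : ∑ b : β, g b < ∑ _b : β, m :=
    Finset.sum_lt_sum (fun i _ => h i) ⟨b, mem_univ b, hlt⟩
  rw [Finset.sum_const, smul_eq_mul, Finset.card_univ] at this
  omega

end Stmt9

namespace Stmt9

lemma comm_of_comp {n : ℕ} (hn : 2 ≤ n) {V : Type} [Fintype V]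
    (hcard : Fintype.card V = 2 ^ n)
    (φ : Fin (n + 1) → V → V)
    (hinv : ∀ c, Function.Involutive (φ c))
    (hfpf : ∀ c v, φ c v ≠ v)
    (hlen : ∀ k l : Fin (n + 1), k ≠ l → ∀ v : V, φ k v ≠ φ l v)
    (hcomp : ∀ C : Finset (Fin (n + 1)), 1 ≤ C.card → C.card ≤ n →
      Nat.card (Quot (fun v w : V => ∃ c ∈ C, φ c v = w)) = 2 ^ (n - C.card)) :
    ∀ k l (v : V), φ k (φ l v) = φ l (φ k v) := by
  classical
  intro k l v
  rcases eq_or_ne k l with rfl | hkl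
  · rfl
  by_contra hne
  set C : Finset (Fin (n + 1)) := {k, l} with hCdef
  have hCcard : C.card = 2 := Finset.card_pair hkl
  set r : V → V → Prop := fun v w => ∃ c ∈ C, φ c v = w with hrdef
  haveI : Fintype (Quot r) := Fintype.ofFinite _
  have hcount : Fintype.card (Quot r) = 2 ^ (n - 2) := by
    have h := hcomp C (by rw [hCcard]; omega) (by rw [hCcard]; omega)
    rw [hCcard] at h
    rw [← Nat.card_eq_fintype_card]
    exact h
  have hqk : ∀ u : V, Quot.mk r (φ k u) = Quot.mk r u :=
    fun u => (Quot.sound ⟨k, by simp [hCdef], rfl⟩).symm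
  have hql : ∀ u : V, Quot.mk r (φ l u) = Quot.mk r u :=
    fun u => (Quot.sound ⟨l, by simp [hCdef], rfl⟩).symm
  -- distinctness facts
  have d1 : ∀ w : V, w ≠ φ k w := fun w => (hfpf k w).symm
  have d2 : ∀ w : V, w ≠ φ l w := fun w => (hfpf l w).symm
  have d3 : ∀ w : V, w ≠ φ k (φ l w) := by
    intro w h
    exact hlen k l hkl w (by conv_lhs => rw [h, hinv k])
  have d4 : ∀ w : V, φ k w ≠ φ l w := fun w => hlen k l hkl w
  have d5 : ∀ w : V, φ k w ≠ φ k (φ l w) := fun w => (hinv k).injective.ne (d2 w)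
  have d6 : ∀ w : V, φ l w ≠ φ k (φ l w) := fun w => (hfpf k (φ l w)).symm
  have hsub4 : ∀ w : V, ({w, φ k w, φ l w, φ k (φ l w)} : Finset V) ⊆
      univ.filter fun a => Quot.mk r a = Quot.mk r w := by
    intro w x hx
    simp only [Finset.mem_insert, Finset.mem_singleton] at hx
    rcases hx with rfl | rfl | rfl | rfl <;>
      simp only [mem_filter, mem_univ, true_and]
    · exact hqk w
    · exact hql w
    · rw [hqk, hql]
  have hcard4 : ∀ w : V, ({w, φ k w, φ l w, φ k (φ l w)} : Finset V).card = 4 := by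
    intro w
    rw [Finset.card_insert_of_notMem, Finset.card_insert_of_notMem,
      Finset.card_insert_of_notMem, Finset.card_singleton]
    · simpa using d6 w
    · simp only [Finset.mem_insert, Finset.mem_singleton]
      push_neg
      exact ⟨d4 w, d5 w⟩
    · simp only [Finset.mem_insert, Finset.mem_singleton]
      push_neg
      exact ⟨d1 w, d2 w, d3 w⟩
  have hfib4 : ∀ b : Quot r, 4 ≤ (univ.filter fun a => Quot.mk r a = b).card := by
    intro b
    obtain ⟨w, rfl⟩ := Quot.exists_rep b
    calc 4 = ({w, φ k w, φ l w, φ k (φ l w)} : Finset V).card := (hcard4 w).symm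
      _ ≤ _ := Finset.card_le_card (hsub4 w)
  -- the bad fiber has ≥ 5 elements
  have e1 : v ≠ φ l (φ k v) := by
    intro h
    exact (d4 v).symm (by conv_lhs => rw [h, hinv l])
  have e2 : φ k v ≠ φ l (φ k v) := (hfpf l (φ k v)).symm
  have e3 : φ l v ≠ φ l (φ k v) := (hinv l).injective.ne (d1 v)
  have e4 : φ k (φ l v) ≠ φ l (φ k v) := hne
  have hsub5 : ({φ l (φ k v), v, φ k v, φ l v, φ k (φ l v)} : Finset V) ⊆
      univ.filter fun a => Quot.mk r a = Quot.mk r v := by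
    intro x hx
    simp only [Finset.mem_insert, Finset.mem_singleton] at hx
    rcases hx with rfl | hx
    · simp only [mem_filter, mem_univ, true_and]
      rw [hql, hqk]
    · exact hsub4 v (by simpa using hx)
  have hcard5 : ({φ l (φ k v), v, φ k v, φ l v, φ k (φ l v)} : Finset V).card = 5 := by
    rw [Finset.card_insert_of_notMem, hcard4 v]
    simp only [Finset.mem_insert, Finset.mem_singleton]
    push_neg
    exact ⟨e1.symm, e2.symm, e3.symm, e4.symm⟩
  have h5 : 4 + 1 ≤ (univ.filter fun a => Quot.mk r a = Quot.mk r v).card := by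
    calc 4 + 1 = ({φ l (φ k v), v, φ k v, φ l v, φ k (φ l v)} : Finset V).card := hcard5.symm
      _ ≤ _ := Finset.card_le_card hsub5
  have hmain := sum_point_bound (fun b => (univ.filter fun a => Quot.mk r a = b).card) 4
    (Quot.mk r v) hfib4 h5
  rw [← card_eq_sum_fibers (Quot.mk r)] at hmain
  rw [hcard, hcount] at hmain
  have hpow : 2 ^ (n - 2) * 4 = 2 ^ n := by
    rw [show (4 : ℕ) = 2 ^ 2 from rfl, ← pow_add]
    congr 1
    omega
  omega

end Stmt9

namespace Stmt9

lemma injOn_P {V ι : Type} [Fintype V] [DecidableEq ι]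
    (φ : ι → V → V) (hco : ∀ a b (v : V), φ a (φ b v) = φ b (φ a v))
    (hinv : ∀ a, Function.Involutive (φ a))
    (C : Finset ι)
    (hQ : Fintype.card V =
      Nat.card (Quot (fun v w : V => ∃ c ∈ C, φ c v = w)) * 2 ^ C.card)
    (v₀ : V) :
    Set.InjOn (fun T => P φ hco T v₀) (C.powerset : Set (Finset ι)) := by
  classical
  set r : V → V → Prop := fun v w => ∃ c ∈ C, φ c v = w with hrdef
  haveI : Fintype (Quot r) := Fintype.ofFinite _
  rw [Nat.card_eq_fintype_card] at hQ
  have hrep : ∀ x y : V, Relation.EqvGen r x y → ∃ T ∈ C.powerset, P φ hco T y = x := by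
    intro x y h
    induction h with
    | rel a b hab =>
      obtain ⟨c, hc, hcb⟩ := hab
      exact ⟨{c}, Finset.mem_powerset.mpr (Finset.singleton_subset_iff.mpr hc),
        by rw [P_singleton, ← hcb]; exact hinv c a⟩
    | refl a => exact ⟨∅, Finset.mem_powerset.mpr (Finset.empty_subset C), P_empty φ hco a⟩
    | symm a b _ ih =>
      obtain ⟨T, hT, hPT⟩ := ih
      exact ⟨T, hT, by rw [← hPT]; exact P_inv φ hco hinv T b⟩
    | trans a b c _ _ ih1 ih2 =>
      obtain ⟨T1, hT1, h1⟩ := ih1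
      obtain ⟨T2, hT2, h2⟩ := ih2
      refine ⟨symmDiff T1 T2, Finset.mem_powerset.mpr ?_,
        by rw [P_symmDiff φ hco hinv, h2, h1]⟩
      have hsd : symmDiff T1 T2 ≤ T1 ⊔ T2 := symmDiff_le_sup
      have hsub2 : T1 ∪ T2 ⊆ C := Finset.union_subset (Finset.mem_powerset.mp hT1)
        (Finset.mem_powerset.mp hT2)
      refine le_trans hsd (Finset.le_iff_subset.mpr ?_)
      rw [Finset.sup_eq_union]
      exact hsub2
  have hfibsub : ∀ w : V, (univ.filter fun a => Quot.mk r a = Quot.mk r w) ⊆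
      C.powerset.image (fun T => P φ hco T w) := by
    intro w x hx
    simp only [mem_filter] at hx
    obtain ⟨T, hT, hPT⟩ := hrep x w (Quot.eqvGen_exact hx.2)
    exact Finset.mem_image.mpr ⟨T, hT, hPT⟩
  have hfible : ∀ b : Quot r, (univ.filter fun a => Quot.mk r a = b).card ≤ 2 ^ C.card := by
    intro b
    obtain ⟨w, rfl⟩ := Quot.exists_rep b
    calc (univ.filter fun a => Quot.mk r a = Quot.mk r w).card
        ≤ (C.powerset.image (fun T => P φ hco T w)).card :=
          Finset.card_le_card (hfibsub w)
      _ ≤ C.powerset.card := Finset.card_image_le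
      _ = 2 ^ C.card := Finset.card_powerset C
  have htot : ∑ b : Quot r, (univ.filter fun a => Quot.mk r a = b).card
      = Fintype.card (Quot r) * 2 ^ C.card := by
    rw [← card_eq_sum_fibers (Quot.mk r), hQ]
  have hall := fibers_all_eq _ _ hfible htot
  have hPmk : ∀ T : Finset ι, T ⊆ C → Quot.mk r (P φ hco T v₀) = Quot.mk r v₀ := by
    intro T
    induction T using Finset.induction_on with
    | empty => intro _; rw [P_empty]
    | @insert a T ha ih =>
      intro hsub
      have haC : a ∈ C := hsub (mem_insert_self a T)
      have hTC : T ⊆ C := (Finset.insert_subset_iff.mp hsub).2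
      rw [P_insert φ hco ha]
      have hq : Quot.mk r (φ a (P φ hco T v₀)) = Quot.mk r (P φ hco T v₀) :=
        (Quot.sound ⟨a, haC, rfl⟩).symm
      rw [hq, ih hTC]
  have heq : C.powerset.image (fun T => P φ hco T v₀)
      = univ.filter fun a => Quot.mk r a = Quot.mk r v₀ :=
    Finset.Subset.antisymm (fun x hx => by
      obtain ⟨T, hT, rfl⟩ := Finset.mem_image.mp hx
      simp only [mem_filter, mem_univ, true_and]
      exact hPmk T (Finset.mem_powerset.mp hT)) (hfibsub v₀)
  apply Finset.injOn_of_card_image_eq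
  rw [heq, hall (Quot.mk r v₀), Finset.card_powerset]

end Stmt9


open Stmt9

/-- The standard colored graph on `{0,1}ⁿ`: the `j`-colored edge (`j < n`) flips the `j`-th
coordinate, and the `n`-colored edge joins antipodal vectors. -/
def stdCube (n : ℕ) (c : Fin (n + 1)) (v : Fin n → ZMod 2) : Fin n → ZMod 2 :=
  if h : (c : ℕ) < n then v + Pi.single (⟨(c : ℕ), h⟩ : Fin n) 1 else v + 1

/-- Up to colored-graph isomorphism (a bijection of vertices together with a
bijection of colors), there is a unique `(n+1)`-regular properly edge-colored graph on
`2ⁿ` vertices (`n ≥ 2`), encoded by fixed-point-free involutions `φ c`, satisfying: (i)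
every bi-colored cycle has length `≥ 4`, and (ii) for every color set `C` with
`1 ≤ |C| ≤ n` the subgraph induced by `C` has exactly `2^{n-|C|}` connected components.
Namely, it is the `n`-cube with monochromatic parallel classes in colors `0,…,n-1`
together with the `n`-colored antipodal matching. -/
theorem stmt_9 (n : ℕ) (hn : 2 ≤ n) (V : Type) [Fintype V]
    (hcard : Fintype.card V = 2 ^ n)
    (φ : Fin (n + 1) → V → V)
    (hinv : ∀ c, Function.Involutive (φ c))
    (hfpf : ∀ c v, φ c v ≠ v)
    (hlen : ∀ k l : Fin (n + 1), k ≠ l → ∀ v : V, φ k v ≠ φ l v)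
    (hcomp : ∀ C : Finset (Fin (n + 1)), 1 ≤ C.card → C.card ≤ n →
      Nat.card (Quot (fun v w : V => ∃ c ∈ C, φ c v = w)) = 2 ^ (n - C.card)) :
    ∃ (σ : Equiv.Perm (Fin (n + 1))) (f : (Fin n → ZMod 2) ≃ V),
      ∀ (c : Fin (n + 1)) (v : Fin n → ZMod 2),
        f (stdCube n c v) = φ (σ c) (f v) := by
  classical
  have two : ∀ a : ZMod 2, a = 0 ∨ a = 1 := by decide
  have hco : ∀ a b (v : V), φ a (φ b v) = φ b (φ a v) :=
    comm_of_comp hn hcard φ hinv hfpf hlen hcomp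
  -- basic objects
  set F : (Fin n → ZMod 2) → Finset (Fin n) :=
    fun x => univ.filter (fun i => x i = 1) with hFdef
  set S : (Fin n → ZMod 2) → Finset (Fin (n + 1)) :=
    fun x => (F x).image Fin.castSucc with hSdef
  set C₀ : Finset (Fin (n + 1)) := (univ : Finset (Fin n)).image Fin.castSucc with hC₀def
  have hcastinj : Function.Injective (Fin.castSucc : Fin n → Fin (n + 1)) :=
    Fin.castSucc_injective n
  have hC₀card : C₀.card = n := by
    rw [hC₀def, Finset.card_image_of_injective _ hcastinj, Finset.card_univ, Fintype.card_fin]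
  have hSsub : ∀ x, S x ⊆ C₀ := fun x => Finset.image_subset_image (Finset.filter_subset _ _)
  have hSmem : ∀ x (i : Fin n), Fin.castSucc i ∈ S x ↔ x i = 1 := by
    intro x i
    simp only [hSdef, Finset.mem_image, hFdef, mem_filter, mem_univ, true_and]
    constructor
    · rintro ⟨a, ha, he⟩
      rwa [hcastinj he] at ha
    · intro h
      exact ⟨i, h, rfl⟩
  have hSinj : Function.Injective S := by
    intro x y hxy
    funext i
    have h1 := (hSmem x i).symm.trans (hxy ▸ hSmem y i)
    rcases two (x i) with h | h <;> rcases two (y i) with h' | h' <;> rw [h, h'] <;>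
      rw [h, h'] at h1 <;> first | rfl | (exfalso; revert h1; decide)
  -- nonempty V
  have hpos : 0 < Fintype.card V := by rw [hcard]; positivity
  obtain ⟨v₀⟩ := Fintype.card_pos_iff.mp hpos
  set f₀ : (Fin n → ZMod 2) → V := fun x => P φ hco (S x) v₀ with hf₀def
  -- key Finset identities
  have hFstep : ∀ x (j : Fin n), F (x + Pi.single j 1) = symmDiff {j} (F x) := by
    intro x j
    ext i
    simp only [hFdef, mem_filter, mem_univ, true_and, Finset.mem_symmDiff,
      Finset.mem_singleton, Pi.add_apply]
    by_cases hij : i = j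
    · subst hij
      rw [Pi.single_eq_same]
      rcases two (x i) with h | h <;> rw [h] <;> simp <;> decide
    · rw [Pi.single_eq_of_ne hij, add_zero]
      simp [hij]
  have hFadd : ∀ x y, F (x + y) = symmDiff (F x) (F y) := by
    intro x y
    ext i
    simp only [hFdef, mem_filter, mem_univ, true_and, Finset.mem_symmDiff, Pi.add_apply]
    rcases two (x i) with h | h <;> rcases two (y i) with h' | h' <;> rw [h, h'] <;> decide
  have hSstep : ∀ x (j : Fin n), S (x + Pi.single j 1) = symmDiff {Fin.castSucc j} (S x) := by
    intro x j
    rw [hSdef]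
    simp only
    rw [hFstep, Finset.image_symmDiff _ _ hcastinj, Finset.image_singleton]
  have hSadd : ∀ x y, S (x + y) = symmDiff (S x) (S y) := by
    intro x y
    rw [hSdef]
    simp only
    rw [hFadd, Finset.image_symmDiff _ _ hcastinj]
  have hstep : ∀ x (j : Fin n), f₀ (x + Pi.single j 1) = φ (Fin.castSucc j) (f₀ x) := by
    intro x j
    rw [hf₀def]
    simp only
    rw [hSstep, P_symmDiff φ hco hinv, P_singleton]
  -- injectivity of f₀
  have hQ : Fintype.card V =
      Nat.card (Quot (fun v w : V => ∃ c ∈ C₀, φ c v = w)) * 2 ^ C₀.card := by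
    rw [hcomp C₀ (by rw [hC₀card]; omega) (by rw [hC₀card]), hC₀card, hcard]
    simp
  have hinjOn := injOn_P φ hco hinv C₀ hQ v₀
  have hf₀inj : Function.Injective f₀ := by
    intro x y hxy
    apply hSinj
    exact hinjOn (Finset.mem_powerset.mpr (hSsub x)) (Finset.mem_powerset.mpr (hSsub y)) hxy
  have hbij : Function.Bijective f₀ := by
    rw [Fintype.bijective_iff_injective_and_card]
    refine ⟨hf₀inj, ?_⟩
    rw [hcard]
    simp [Fintype.card_fun]
  -- the last color
  obtain ⟨t, ht⟩ := hbij.2 (φ (Fin.last n) v₀)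
  have hlaststep : ∀ x, φ (Fin.last n) (f₀ x) = f₀ (x + t) := by
    intro x
    rw [hf₀def]
    simp only
    rw [hSadd, P_symmDiff φ hco hinv, P_comm φ hco]
    have : φ (Fin.last n) v₀ = P φ hco (S t) v₀ := ht.symm
    rw [this]
  have hzero : f₀ 0 = v₀ := by
    rw [hf₀def]
    simp only
    have : S 0 = ∅ := by
      rw [hSdef]
      simp only
      have : F 0 = ∅ := by
        rw [hFdef]
        ext i
        simp only [mem_filter, mem_univ, true_and, Finset.notMem_empty, iff_false,
          Pi.zero_apply]
        decide
      rw [this, Finset.image_empty]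
    rw [this, P_empty]
  -- every coordinate of t is 1
  have htone : ∀ i : Fin n, t i = 1 := by
    intro i
    rcases two (t i) with h0 | h1
    swap
    · exact h1
    exfalso
    set c : Fin (n + 1) := Fin.castSucc i with hcdef
    set C : Finset (Fin (n + 1)) := univ.erase c with hCdef
    have hCcard : C.card = n := by
      rw [hCdef, Finset.card_erase_of_mem (mem_univ c), Finset.card_univ, Fintype.card_fin]
      omega
    set r : V → V → Prop := fun v w => ∃ c' ∈ C, φ c' v = w with hrdef
    have h1comp : Nat.card (Quot r) = 1 := by
      have h := hcomp C (by rw [hCcard]; omega) (by rw [hCcard])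
      rw [hCcard] at h
      simpa using h
    have hsub : Subsingleton (Quot r) := (Nat.card_eq_one_iff_unique.mp h1comp).1
    have heqv : Relation.EqvGen r v₀ (f₀ (Pi.single i 1)) :=
      Quot.eqvGen_exact (Subsingleton.elim _ _)
    set Good : V → Prop := fun u => ∃ x, x i = 0 ∧ f₀ x = u with hGdef
    have hclosure : ∀ a b, r a b → Good a → Good b := by
      rintro a b ⟨c', hc', rfl⟩ ⟨x, hxi, rfl⟩
      have hc'ne : c' ≠ c := (Finset.mem_erase.mp hc').1
      by_cases hlt : (c' : ℕ) < n
      · set j : Fin n := ⟨(c' : ℕ), hlt⟩ with hjdef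
        have hcj : Fin.castSucc j = c' := by
          apply Fin.ext
          rfl
        have hji : j ≠ i := by
          intro h
          apply hc'ne
          rw [← hcj, h, hcdef]
        refine ⟨x + Pi.single j 1, ?_, ?_⟩
        · rw [Pi.add_apply, Pi.single_eq_of_ne (Ne.symm hji), hxi, add_zero]
        · rw [hstep, hcj]
      · have hcl : c' = Fin.last n := by
          apply Fin.ext
          have := c'.isLt
          simp only [Fin.val_last]
          omega
        refine ⟨x + t, ?_, ?_⟩
        · rw [Pi.add_apply, hxi, h0, add_zero]
        · rw [hcl]; exact (hlaststep x).symm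
    have hrsymm : ∀ a b, r a b → r b a := by
      rintro a b ⟨c', hc', rfl⟩
      exact ⟨c', hc', hinv c' a⟩
    have hGiff : ∀ a b, Relation.EqvGen r a b → (Good a ↔ Good b) := by
      intro a b h
      induction h with
      | rel a b hab => exact ⟨hclosure a b hab, hclosure b a (hrsymm a b hab)⟩
      | refl a => rfl
      | symm a b _ ih => exact ih.symm
      | trans a b c _ _ ih1 ih2 => exact ih1.trans ih2
    have hGv₀ : Good v₀ := ⟨0, rfl, hzero⟩
    have hGbad : Good (f₀ (Pi.single i 1)) := (hGiff _ _ heqv).mp hGv₀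
    obtain ⟨x, hxi, hfx⟩ := hGbad
    have hx : x = Pi.single i 1 := hf₀inj hfx
    rw [hx, Pi.single_eq_same] at hxi
    exact absurd hxi (by decide)
  have ht1 : t = 1 := by
    funext i
    rw [htone i]
    rfl
  -- conclusion
  refine ⟨Equiv.refl _, Equiv.ofBijective f₀ hbij, ?_⟩
  intro c x
  show f₀ (stdCube n c x) = φ c (f₀ x)
  unfold stdCube
  by_cases h : (c : ℕ) < n
  · rw [dif_pos h]
    have hc : Fin.castSucc (⟨(c : ℕ), h⟩ : Fin n) = c := by
      apply Fin.ext
      rfl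
    rw [hstep, hc]
  · rw [dif_neg h]
    have hcl : c = Fin.last n := by
      apply Fin.ext
      have := c.isLt
      simp only [Fin.val_last]
      omega
    rw [hcl, hlaststep, ht1]
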